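/- arXiv:1902.08015 — 7 statements merged into one kernel-verified Lean document; each statement's English description precedes it below -/
import Mathlib

section
/- For integers n ≥ k ≥ 0 and λ ∈ ℝ, the degenerate incomplete Bell polynomial satisfies the explicit formula B_{n,k}(x₁,x₂,…,x_{n-k+1}|λ) = ∑ n!/(i₁! i₂! ⋯ i_{n-k+1}!) · (x₁(1)_{1,λ}/1!)^{i₁} (x₂(1)_{2,λ}/2!)^{i₂} ⋯ (x_{n-k+1}(1)_{n-k+1,λ}/(n-k+1)!)^{i_{n-k+1}}, where the summation is over all nonnegative integers i₁,…,i_{n-k+1} with i₁+i₂+⋯+i_{n-k+1} = k and i₁+2i₂+⋯+(n-k+1)i_{n-k+1} = n. -/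
open PowerSeries Finset Nat

/-- The degenerate falling factorial `(x)_{n,λ} = x(x-λ)⋯(x-(n-1)λ)`. -/
noncomputable def dFall (l x : ℝ) (n : ℕ) : ℝ := ∏ i ∈ Finset.range n, (x - i * l)

/-- The degenerate rising factorial `⟨x⟩_{n,λ} = x(x+λ)⋯(x+(n-1)λ)`. -/
noncomputable def dRise (l x : ℝ) (n : ℕ) : ℝ := ∏ i ∈ Finset.range n, (x + i * l)

/-- The degenerate exponential formal power series `e_λ^x(t) = ∑_{n≥0} (x)_{n,λ} tⁿ/n!`. -/
noncomputable def degExp (l x : ℝ) : PowerSeries ℝ :=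
  PowerSeries.mk fun n => dFall l x n / (n ! : ℝ)

/-- Exponential of a formal power series `G` (with zero constant term):
`coeff n (exp G) = ∑_{k=0}^{n} (1/k!) coeff n (G^k)`. -/
noncomputable def expComp (G : PowerSeries ℝ) : PowerSeries ℝ :=
  PowerSeries.mk fun n =>
    ∑ k ∈ Finset.range (n + 1), (k ! : ℝ)⁻¹ * PowerSeries.coeff n (G ^ k)

/-- The series `∑_{m≥1} x_m (1)_{m,λ} t^m/m!`. -/
noncomputable def degBellSeries (l : ℝ) (x : ℕ → ℝ) : PowerSeries ℝ :=
  PowerSeries.mk fun m => if m = 0 then 0 else x m * dFall l 1 m / (m ! : ℝ)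

/-- The degenerate incomplete Bell polynomial `B_{n,k}(x₁,…,x_{n-k+1}|λ)`, defined by
`(1/k!)(∑_{m≥1} x_m (1)_{m,λ} t^m/m!)^k = ∑_{n≥k} B_{n,k}(x₁,…|λ) tⁿ/n!`. -/
noncomputable def degIncBell (l : ℝ) (x : ℕ → ℝ) (n k : ℕ) : ℝ :=
  (n ! : ℝ) * PowerSeries.coeff n ((k ! : ℝ)⁻¹ • (degBellSeries l x) ^ k)

/-- The degenerate complete Bell polynomial `B_n(x₁,…,x_n|λ)`, defined by
`exp(∑_{i≥1} x_i (1)_{i,λ} t^i/i!) = ∑_{n≥0} B_n(x₁,…,x_n|λ) tⁿ/n!`. -/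
noncomputable def degCompBell (l : ℝ) (x : ℕ → ℝ) (n : ℕ) : ℝ :=
  (n ! : ℝ) * PowerSeries.coeff n (expComp (degBellSeries l x))

/-- The degenerate Stirling numbers of the second kind `S_{2,λ}(n,k)`, defined by
`(1/k!)(e_λ(t)-1)^k = ∑_{n≥k} S_{2,λ}(n,k) tⁿ/n!`. -/
noncomputable def degStirling2 (l : ℝ) (n k : ℕ) : ℝ :=
  (n ! : ℝ) * PowerSeries.coeff n ((k ! : ℝ)⁻¹ • (degExp l 1 - 1) ^ k)

/-- The degenerate Bell polynomials `B_{n,λ}(x)`, defined by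
`exp(x(e_λ(t)-1)) = ∑_{n≥0} B_{n,λ}(x) tⁿ/n!`. -/
noncomputable def degBell (l x : ℝ) (n : ℕ) : ℝ :=
  (n ! : ℝ) * PowerSeries.coeff n (expComp (x • (degExp l 1 - 1)))

/-- The formal power series `log(1+t) = ∑_{n≥1} (-1)^{n+1} tⁿ/n`. -/
noncomputable def logOnePlus : PowerSeries ℝ :=
  PowerSeries.mk fun n => if n = 0 then 0 else (-1) ^ (n + 1) / (n : ℝ)

/-- The (signed) Stirling numbers of the first kind `S₁(n,k)`, defined by
`(1/k!)(log(1+t))^k = ∑_{n≥k} S₁(n,k) tⁿ/n!`. -/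
noncomputable def stirling1 (n k : ℕ) : ℝ :=
  (n ! : ℝ) * PowerSeries.coeff n ((k ! : ℝ)⁻¹ • logOnePlus ^ k)

/-- The series `∑_{m≥1} x_m ((1/2)_{m,λ} - (-1)^m ⟨1/2⟩_{m,λ}) t^m/m!`. -/
noncomputable def centralSeq (l : ℝ) (x : ℕ → ℝ) : PowerSeries ℝ :=
  PowerSeries.mk fun m => if m = 0 then 0 else
    x m * (dFall l (1 / 2) m - (-1) ^ m * dRise l (1 / 2) m) / (m ! : ℝ)

/-- The degenerate central incomplete Bell polynomial `T_{n,k}(x₁,…,x_{n-k+1}|λ)`. -/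
noncomputable def degCentIncBell (l : ℝ) (x : ℕ → ℝ) (n k : ℕ) : ℝ :=
  (n ! : ℝ) * PowerSeries.coeff n ((k ! : ℝ)⁻¹ • (centralSeq l x) ^ k)

/-- The degenerate central factorial numbers of the second kind `T_{2,λ}(n,k)`, defined by
`(1/k!)(e_λ^{1/2}(t) - e_λ^{-1/2}(t))^k = ∑_{n≥k} T_{2,λ}(n,k) tⁿ/n!`. -/
noncomputable def degCentFact2 (l : ℝ) (n k : ℕ) : ℝ :=
  (n ! : ℝ) * PowerSeries.coeff n
    ((k ! : ℝ)⁻¹ • (degExp l (1 / 2) - degExp l (-(1 / 2))) ^ k)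

/-- The degenerate central Bell polynomial `B^{(c)}_{n,λ}(x)`, defined by
`exp(x(e_λ^{1/2}(t)-e_λ^{-1/2}(t))) = ∑_{n≥0} B^{(c)}_{n,λ}(x) tⁿ/n!`. -/
noncomputable def degCentBellPoly (l x : ℝ) (n : ℕ) : ℝ :=
  (n ! : ℝ) * PowerSeries.coeff n
    (expComp (x • (degExp l (1 / 2) - degExp l (-(1 / 2)))))

/-- The degenerate central complete Bell polynomial `B_n^{(c)}(x₁,…,x_n|λ)`. -/
noncomputable def degCentCompBell (l : ℝ) (x : ℕ → ℝ) (n : ℕ) : ℝ :=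
  (n ! : ℝ) * PowerSeries.coeff n (expComp (centralSeq l x))

/-- The ordinary incomplete Bell polynomials `B_{n,k}(x₁,…,x_{n-k+1})`, defined by
`(1/k!)(∑_{m≥1} x_m t^m/m!)^k = ∑_{n≥k} B_{n,k}(x₁,…) tⁿ/n!`. -/
noncomputable def incBell (x : ℕ → ℝ) (n k : ℕ) : ℝ :=
  (n ! : ℝ) * PowerSeries.coeff n
    ((k ! : ℝ)⁻¹ • (PowerSeries.mk fun m => if m = 0 then 0 else x m / (m ! : ℝ)) ^ k)

/-- The set of tuples `(i₁,…,i_{n-k+1})` of nonnegative integers with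
`i₁+⋯+i_{n-k+1} = k` and `i₁+2i₂+⋯+(n-k+1)i_{n-k+1} = n`
(each such `i_j` is at most `n`, so no solution is cut off). -/
noncomputable def partIdx (n k : ℕ) : Finset (Fin (n - k + 1) → ℕ) :=
  (Fintype.piFinset fun _ => Finset.range (n + 1)).filter
    fun i => (∑ j, i j) = k ∧ (∑ j, (j.1 + 1) * i j) = n

/-- The set of tuples `(m₁,…,m_n)` of nonnegative integers with `m₁+2m₂+⋯+nm_n = n`. -/
noncomputable def partIdx' (n : ℕ) : Finset (Fin n → ℕ) :=
  (Fintype.piFinset fun _ => Finset.range (n + 1)).filter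
    fun m => (∑ j, (j.1 + 1) * m j) = n

section Helpers

private lemma coeff_pow_congr (A B : ℝ⟦X⟧) (n k : ℕ)
    (h : ∀ m ≤ n, PowerSeries.coeff m A = PowerSeries.coeff m B) :
    PowerSeries.coeff n (A ^ k) = PowerSeries.coeff n (B ^ k) := by
  rw [PowerSeries.coeff_pow, PowerSeries.coeff_pow]
  refine Finset.sum_congr rfl fun d hd => Finset.prod_congr rfl fun i hi => ?_
  rw [Finset.mem_finsuppAntidiag] at hd
  refine h _ ?_
  calc d i ≤ ∑ j ∈ Finset.range k, d j :=
        Finset.single_le_sum (fun _ _ => Nat.zero_le _) hi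
    _ = n := hd.1

private lemma monomial_mul_monomial' (m n : ℕ) (a b : ℝ) :
    PowerSeries.monomial m a * PowerSeries.monomial n b =
      PowerSeries.monomial (m + n) (a * b) := by
  have := MvPowerSeries.monomial_mul_monomial (R := ℝ)
    (Finsupp.single () m) (Finsupp.single () n) a b
  rw [← Finsupp.single_add] at this
  exact this

private lemma monomial_pow' (m : ℕ) (r : ℝ) (e : ℕ) :
    (PowerSeries.monomial m r) ^ e = PowerSeries.monomial (m * e) (r ^ e) := by
  induction e with
  | zero => simp
  | succ e ih =>
    rw [pow_succ, ih, monomial_mul_monomial', pow_succ, Nat.mul_succ]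

private lemma prod_monomial (s : Finset ℕ) (g : ℕ → ℕ) (c : ℕ → ℝ) :
    (∏ m ∈ s, PowerSeries.monomial (g m) (c m)) =
      PowerSeries.monomial (∑ m ∈ s, g m) (∏ m ∈ s, c m) := by
  induction s using Finset.cons_induction with
  | empty => simp
  | cons a s ha ih =>
    rw [Finset.prod_cons, ih, monomial_mul_monomial', Finset.sum_cons,
      Finset.prod_cons]

@[to_additive]
private lemma prod_Icc_reindex {M : Type*} [CommMonoid M] (N n : ℕ) (hNn : N ≤ n)
    (d : ℕ → ℕ) (hd : ∀ m, m ∉ Finset.Icc 1 N → d m = 0) (f : ℕ → ℕ → M)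
    (hf : ∀ m, f m 0 = 1) :
    ∏ m ∈ Finset.Icc 1 n, f m (d m) = ∏ j : Fin N, f (j.1 + 1) (d (j.1 + 1)) := by
  rw [← Finset.prod_subset (Finset.Icc_subset_Icc_right hNn)
    (fun m _ hm => by rw [hd m hm, hf])]
  rw [← Finset.Ico_add_one_right_eq_Icc, Finset.prod_Ico_eq_prod_range]
  rw [← Fin.prod_univ_eq_prod_range (fun i => f (1 + i) (d (1 + i))) (N + 1 - 1)]
  have hN : N + 1 - 1 = N := rfl
  refine Finset.prod_nbij' (fun j => ⟨j.1, by omega⟩) (fun j => ⟨j.1, by omega⟩)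
    (fun _ _ => Finset.mem_univ _) (fun _ _ => Finset.mem_univ _)
    (fun _ _ => rfl) (fun _ _ => rfl) (fun j _ => by simp [Nat.add_comm])

/-- `Φ` sends a tuple indexed by `Fin N` to the corresponding function `ℕ → ℕ`. -/
private def Phi (N : ℕ) (i : Fin N → ℕ) : ℕ → ℕ :=
  fun m => ∑ j : Fin N, if m = j.1 + 1 then i j else 0

private lemma Phi_succ (N : ℕ) (i : Fin N → ℕ) (j : Fin N) :
    Phi N i (j.1 + 1) = i j := by
  rw [Phi, Finset.sum_eq_single_of_mem j (Finset.mem_univ j)]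
  · simp
  · intro j' _ hj'
    rw [if_neg]
    intro h
    exact hj' (Fin.ext (by omega))

private lemma Phi_eq_zero (N : ℕ) (i : Fin N → ℕ) (m : ℕ)
    (hm : m ∉ Finset.Icc 1 N) : Phi N i m = 0 := by
  rw [Finset.mem_Icc] at hm
  refine Finset.sum_eq_zero fun j _ => ?_
  rw [if_neg]
  intro h
  exact hm ⟨by omega, by have := j.2; omega⟩

private lemma support_bound (n k : ℕ) (d : ℕ → ℕ)
    (hsum : ∑ m ∈ Finset.Icc 1 n, d m = k)
    (hw : ∑ m ∈ Finset.Icc 1 n, m * d m = n)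
    (hsupp : ∀ m, d m ≠ 0 → m ∈ Finset.Icc 1 n) :
    ∀ m, m ∉ Finset.Icc 1 (n - k + 1) → d m = 0 := by
  intro m hm
  by_contra h
  have hmem := hsupp m h
  rw [Finset.mem_Icc] at hmem hm
  push_neg at hm
  have hm2 : n - k + 2 ≤ m := hm hmem.1
  have hkn : k ≤ n := by
    calc k = ∑ j ∈ Finset.Icc 1 n, d j := hsum.symm
      _ ≤ ∑ j ∈ Finset.Icc 1 n, j * d j :=
        Finset.sum_le_sum fun j hj => Nat.le_mul_of_pos_left _
          (by rw [Finset.mem_Icc] at hj; omega)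
      _ = n := hw
  have key : ∑ j ∈ Finset.Icc 1 n, (d j + if j = m then (m - 1) * d m else 0)
      ≤ ∑ j ∈ Finset.Icc 1 n, j * d j := by
    refine Finset.sum_le_sum fun j hj => ?_
    rw [Finset.mem_Icc] at hj
    by_cases hjm : j = m
    · subst hjm
      rw [if_pos rfl]
      have : d j + (j - 1) * d j = (1 + (j - 1)) * d j := by ring
      rw [this]
      have : 1 + (j - 1) = j := by omega
      rw [this]
    · rw [if_neg hjm, Nat.add_zero]
      exact Nat.le_mul_of_pos_left _ (by omega)
  rw [Finset.sum_add_distrib, hsum, Finset.sum_ite_eq' (Finset.Icc 1 n) m,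
    if_pos (Finset.mem_Icc.mpr hmem), hw] at key
  have hd1 : 1 ≤ d m := Nat.one_le_iff_ne_zero.mpr h
  have : n - k + 1 ≤ (m - 1) * d m := by
    calc n - k + 1 ≤ m - 1 := by omega
      _ = (m - 1) * 1 := (Nat.mul_one _).symm
      _ ≤ (m - 1) * d m := Nat.mul_le_mul_left _ hd1
  omega

/-- The coefficient sequence of `degBellSeries`. -/
private noncomputable def aa (l : ℝ) (x : ℕ → ℝ) : ℕ → ℝ :=
  fun m => if m = 0 then 0 else x m * dFall l 1 m / (m ! : ℝ)

private lemma aa_zero (l : ℝ) (x : ℕ → ℝ) : aa l x 0 = 0 := rfl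

private lemma aa_succ (l : ℝ) (x : ℕ → ℝ) (m : ℕ) (hm : m ≠ 0) :
    aa l x m = x m * dFall l 1 m / (m ! : ℝ) := if_neg hm

private lemma degBellSeries_eq (l : ℝ) (x : ℕ → ℝ) :
    degBellSeries l x = PowerSeries.mk (aa l x) := rfl

end Helpers

/-- explicit formula for the degenerate incomplete Bell polynomials. -/
theorem degIncBell_explicit (l : ℝ) (x : ℕ → ℝ) (n k : ℕ) (hkn : k ≤ n) :
    degIncBell l x n k =
      ∑ i ∈ partIdx n k,
        ((n ! : ℝ) / ∏ j, ((i j)! : ℝ)) *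
          ∏ j, (x (j.1 + 1) * dFall l 1 (j.1 + 1) / ((j.1 + 1)! : ℝ)) ^ i j := by
  classical
  rcases Nat.eq_zero_or_pos k with rfl | hk
  · -- the case `k = 0`
    rw [degIncBell]
    simp only [Nat.factorial_zero, Nat.cast_one, inv_one, one_smul, pow_zero,
      PowerSeries.coeff_one]
    rcases Nat.eq_zero_or_pos n with rfl | hn
    · have hset : partIdx 0 0 = {fun _ => 0} := by
        ext i
        simp only [partIdx, Finset.mem_filter, Fintype.mem_piFinset, Finset.mem_range,
          Finset.mem_singleton]
        constructor
        · rintro ⟨-, hs, -⟩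
          funext j
          exact Finset.sum_eq_zero_iff.mp hs j (Finset.mem_univ j)
        · rintro rfl
          simp
      rw [hset]
      simp
    · rw [if_neg (by omega)]
      have hset : partIdx n 0 = ∅ := by
        rw [Finset.eq_empty_iff_forall_notMem]
        intro i hi
        simp only [partIdx, Finset.mem_filter] at hi
        obtain ⟨-, h1, h2⟩ := hi
        rw [Finset.sum_eq_zero (fun j _ => by
          rw [Finset.sum_eq_zero_iff.mp h1 j (Finset.mem_univ j), Nat.mul_zero])] at h2
        omega
      rw [hset]
      simp
  -- now `1 ≤ k`
  have hN : n - k + 1 ≤ n := by omega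
  -- Step 1: replace the Bell series by a finite sum of monomials
  have h1 : PowerSeries.coeff n ((degBellSeries l x) ^ k)
      = PowerSeries.coeff n
          ((∑ m ∈ Finset.Icc 1 n, PowerSeries.monomial m (aa l x m)) ^ k) := by
    refine coeff_pow_congr _ _ n k fun m hm => ?_
    rw [degBellSeries_eq, PowerSeries.coeff_mk, map_sum]
    simp only [PowerSeries.coeff_monomial]
    rw [Finset.sum_ite_eq (Finset.Icc 1 n) m (aa l x)]
    by_cases h0 : m ∈ Finset.Icc 1 n
    · rw [if_pos h0]
    · rw [if_neg h0]
      have hm0 : m = 0 := by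
        rw [Finset.mem_Icc] at h0
        omega
      rw [hm0, aa_zero]
  -- Step 2: multinomial expansion
  have h2 : (∑ m ∈ Finset.Icc 1 n, PowerSeries.monomial m (aa l x m)) ^ k
      = ∑ d ∈ Finset.piAntidiag (Finset.Icc 1 n) k,
          ((Nat.multinomial (Finset.Icc 1 n) d : ℕ) : ℝ⟦X⟧) *
            PowerSeries.monomial (∑ m ∈ Finset.Icc 1 n, m * d m)
              (∏ m ∈ Finset.Icc 1 n, aa l x m ^ d m) := by
    rw [Finset.sum_pow_eq_sum_piAntidiag]
    refine Finset.sum_congr rfl fun d hd => ?_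
    congr 1
    simp_rw [monomial_pow']
    exact _root_.prod_monomial _ _ _
  -- Step 3: extract the `n`-th coefficient
  have h3 : PowerSeries.coeff n ((degBellSeries l x) ^ k)
      = ∑ d ∈ (Finset.piAntidiag (Finset.Icc 1 n) k).filter
            (fun d => ∑ m ∈ Finset.Icc 1 n, m * d m = n),
          ((Nat.multinomial (Finset.Icc 1 n) d : ℕ) : ℝ) *
            ∏ m ∈ Finset.Icc 1 n, aa l x m ^ d m := by
    rw [h1, h2, map_sum, Finset.sum_filter]
    refine Finset.sum_congr rfl fun d hd => ?_
    rw [show ((Nat.multinomial (Finset.Icc 1 n) d : ℕ) : ℝ⟦X⟧)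
        = PowerSeries.C ((Nat.multinomial (Finset.Icc 1 n) d : ℕ) : ℝ) from
      (map_natCast (PowerSeries.C) _).symm]
    rw [PowerSeries.coeff_C_mul, PowerSeries.coeff_monomial]
    by_cases h : ∑ m ∈ Finset.Icc 1 n, m * d m = n
    · rw [if_pos h.symm, if_pos h]
    · rw [if_neg (fun hh => h hh.symm), if_neg h, mul_zero]
  rw [degIncBell, map_smul, smul_eq_mul, h3, Finset.mul_sum, Finset.mul_sum]
  -- Step 4: reindex the sum via the bijection `Φ/Ψ`
  refine Finset.sum_nbij' (fun d => fun j : Fin (n - k + 1) => d (j.1 + 1))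
    (fun i => Phi (n - k + 1) i) ?_ ?_ ?_ ?_ ?_
  · -- forward map lands in `partIdx n k`
    intro d hd
    rw [Finset.mem_filter, Finset.mem_piAntidiag] at hd
    obtain ⟨⟨hsum, hsupp⟩, hw⟩ := hd
    have hd0 := support_bound n k d hsum hw hsupp
    rw [partIdx, Finset.mem_filter]
    refine ⟨Fintype.mem_piFinset.mpr fun j => ?_, ?_, ?_⟩
    · rw [Finset.mem_range]
      have hle : d (j.1 + 1) ≤ k := by
        by_cases hj : d (j.1 + 1) = 0
        · omega
        · calc d (j.1 + 1) ≤ (Finset.Icc 1 n).sum d :=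
              Finset.single_le_sum (fun _ _ => Nat.zero_le _) (hsupp _ hj)
            _ = k := hsum
      show d (j.1 + 1) < n + 1
      omega
    · exact (sum_Icc_reindex (n - k + 1) n hN d hd0 (fun _ e => e)
        (fun _ => rfl)).symm.trans hsum
    · exact (sum_Icc_reindex (n - k + 1) n hN d hd0 (fun m e => m * e)
        (fun m => Nat.mul_zero m)).symm.trans hw
  · -- backward map lands in the filtered antidiagonal
    intro i hi
    rw [partIdx, Finset.mem_filter] at hi
    obtain ⟨-, hisum, hiw⟩ := hi
    rw [Finset.mem_filter, Finset.mem_piAntidiag]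
    have hz := Phi_eq_zero (n - k + 1) i
    refine ⟨⟨?_, ?_⟩, ?_⟩
    · refine (sum_Icc_reindex (n - k + 1) n hN _ hz (fun _ e => e) (fun _ => rfl)).trans ?_
      exact (Finset.sum_congr rfl fun j _ => Phi_succ _ _ _).trans hisum
    · intro m hm
      by_contra hmem
      refine hm (hz m fun hmem' => hmem ?_)
      rw [Finset.mem_Icc] at hmem' ⊢
      omega
    · refine (sum_Icc_reindex (n - k + 1) n hN _ hz (fun m e => m * e)
        (fun m => Nat.mul_zero m)).trans ?_
      exact (Finset.sum_congr rfl fun j _ => by rw [Phi_succ]).trans hiw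
  · -- left inverse
    intro d hd
    rw [Finset.mem_filter, Finset.mem_piAntidiag] at hd
    obtain ⟨⟨hsum, hsupp⟩, hw⟩ := hd
    have hd0 := support_bound n k d hsum hw hsupp
    funext m
    show Phi (n - k + 1) (fun j => d (j.1 + 1)) m = d m
    by_cases hm : m ∈ Finset.Icc 1 (n - k + 1)
    · rw [Finset.mem_Icc] at hm
      have hmj : m = (⟨m - 1, by omega⟩ : Fin (n - k + 1)).1 + 1 := by simp; omega
      rw [hmj, Phi_succ]
    · rw [Phi_eq_zero _ _ _ hm, hd0 m hm]
  · -- right inverse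
    intro i hi
    funext j
    exact Phi_succ _ _ _
  · -- the summands agree
    intro d hd
    rw [Finset.mem_filter, Finset.mem_piAntidiag] at hd
    obtain ⟨⟨hsum, hsupp⟩, hw⟩ := hd
    have hd0 := support_bound n k d hsum hw hsupp
    have hprod1 : ∏ m ∈ Finset.Icc 1 n, aa l x m ^ d m
        = ∏ j : Fin (n - k + 1),
            (x (j.1 + 1) * dFall l 1 (j.1 + 1) / ((j.1 + 1)! : ℝ)) ^ d (j.1 + 1) := by
      rw [prod_Icc_reindex (n - k + 1) n hN d hd0 (fun m e => aa l x m ^ e)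
        (fun m => pow_zero _)]
      exact Finset.prod_congr rfl fun j _ => by rw [aa_succ l x _ (Nat.succ_ne_zero _)]
    have hprod2 : ∏ m ∈ Finset.Icc 1 n, ((d m)! : ℝ)
        = ∏ j : Fin (n - k + 1), ((d (j.1 + 1))! : ℝ) :=
      prod_Icc_reindex (n - k + 1) n hN d hd0 (fun _ e => ((e)! : ℝ)) (fun _ => by simp)
    have hfac : (∏ m ∈ Finset.Icc 1 n, (d m)!) * Nat.multinomial (Finset.Icc 1 n) d = k ! := by
      rw [Nat.multinomial_spec, hsum]
    have hprodpos : (0 : ℝ) < ∏ m ∈ Finset.Icc 1 n, ((d m)! : ℝ) :=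
      Finset.prod_pos fun m _ => by exact_mod_cast Nat.factorial_pos _
    have hmult : ((Nat.multinomial (Finset.Icc 1 n) d : ℕ) : ℝ)
        = (k ! : ℝ) / ∏ m ∈ Finset.Icc 1 n, ((d m)! : ℝ) := by
      rw [eq_div_iff (ne_of_gt hprodpos)]
      rw [mul_comm]
      exact_mod_cast congrArg (Nat.cast : ℕ → ℝ) hfac
    rw [hmult, hprod1, ← hprod2]
    have hkfac : ((k ! : ℕ) : ℝ) ≠ 0 := by exact_mod_cast Nat.factorial_ne_zero k
    field_simp
end

section
/- For integers n ≥ k ≥ 0 and λ ∈ ℝ, the degenerate central factorial numbers of the second kind satisfy T_{2,λ}(n,k) = ∑_{m=0}^{n} ( (1/k!) ∑_{l=0}^{k} C(k,l) (-1)^{k-l} (l - k/2)^m ) · λ^{n-m} · S₁(n,m), where S₁(n,m) are the Stirling numbers of the first kind. -/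
open PowerSeries Finset Nat

section Aux

lemma myCoeff_pow_eq_zero {f : ℝ⟦X⟧} (hf : PowerSeries.constantCoeff f = 0)
    {m n : ℕ} (h : n < m) : PowerSeries.coeff n (f ^ m) = 0 := by
  have hd : (PowerSeries.X : ℝ⟦X⟧) ^ m ∣ f ^ m :=
    pow_dvd_pow_of_dvd (PowerSeries.X_dvd_iff.2 hf) m
  exact PowerSeries.X_pow_dvd_iff.1 hd n h

lemma myConstCoeff_log : PowerSeries.constantCoeff logOnePlus = 0 := by
  rw [← PowerSeries.coeff_zero_eq_constantCoeff_apply]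
  simp [logOnePlus]

lemma myCoeff_deriv_log (n : ℕ) :
    PowerSeries.coeff n (d⁄dX ℝ logOnePlus) = (-1) ^ n := by
  rw [PowerSeries.coeff_derivative]
  have h : ((n : ℝ) + 1) ≠ 0 := by positivity
  simp only [logOnePlus, PowerSeries.coeff_mk, Nat.succ_ne_zero, if_false]
  push_cast
  rw [pow_succ, pow_succ]
  field_simp

lemma myOneAddX_mul_dlog : (1 + PowerSeries.X) * d⁄dX ℝ logOnePlus = 1 := by
  ext n
  rw [add_mul, one_mul, map_add]
  cases n with
  | zero => simp [myCoeff_deriv_log]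
  | succ k =>
    rw [PowerSeries.coeff_succ_X_mul, myCoeff_deriv_log, myCoeff_deriv_log,
      PowerSeries.coeff_one]
    simp [pow_succ]

lemma myCoeff_X_mul_deriv (f : ℝ⟦X⟧) (n : ℕ) :
    PowerSeries.coeff n (PowerSeries.X * d⁄dX ℝ f) = n * PowerSeries.coeff n f := by
  cases n with
  | zero => simp
  | succ k =>
    rw [PowerSeries.coeff_succ_X_mul, PowerSeries.coeff_derivative]
    push_cast
    ring

lemma myKey (m n : ℕ) :
    ((n : ℝ) + 1) * PowerSeries.coeff (n + 1) (logOnePlus ^ (m + 1))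
      + n * PowerSeries.coeff n (logOnePlus ^ (m + 1))
    = ((m : ℝ) + 1) * PowerSeries.coeff n (logOnePlus ^ m) := by
  set L := logOnePlus with hLdef
  have hD : d⁄dX ℝ (L ^ (m + 1)) = ((m + 1 : ℕ) : ℝ⟦X⟧) * (L ^ m * d⁄dX ℝ L) := by
    rw [Derivation.leibniz_pow]
    simp [nsmul_eq_mul, smul_eq_mul]
  have h2 : (1 + PowerSeries.X) * d⁄dX ℝ (L ^ (m + 1)) = ((m + 1 : ℕ) : ℝ⟦X⟧) * L ^ m := by
    rw [hD]
    linear_combination (((m + 1 : ℕ) : ℝ⟦X⟧) * L ^ m) * myOneAddX_mul_dlog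
  have h3 := congrArg (PowerSeries.coeff n) h2
  rw [add_mul, one_mul, map_add, myCoeff_X_mul_deriv, PowerSeries.coeff_derivative,
    show ((m + 1 : ℕ) : ℝ⟦X⟧) * L ^ m = (m + 1 : ℕ) • (L ^ m) from (nsmul_eq_mul _ _).symm,
    map_nsmul, nsmul_eq_mul] at h3
  push_cast at h3 ⊢
  linarith [h3]

theorem cs_rec (y : ℝ) (b : ℕ → ℕ → ℝ)
    (hkey : ∀ m n : ℕ, ((n : ℝ) + 1) * b (n + 1) (m + 1) + n * b n (m + 1)
      = ((m : ℝ) + 1) * b n m)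
    (hvan : ∀ m n : ℕ, n < m → b n m = 0)
    (hone : ∀ n : ℕ, b n 0 = if n = 0 then 1 else 0)
    (n : ℕ) :
    ((n : ℝ) + 1) * ∑ m ∈ Finset.range (n + 2), (m ! : ℝ)⁻¹ * y ^ m * b (n + 1) m
      = (y - n) * ∑ m ∈ Finset.range (n + 1), (m ! : ℝ)⁻¹ * y ^ m * b n m := by
  rw [Finset.mul_sum, Finset.sum_range_succ' _ (n + 1)]
  have h0 : ((n : ℝ) + 1) * ((0! : ℝ)⁻¹ * y ^ 0 * b (n + 1) 0) = 0 := by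
    rw [hone]; simp
  rw [h0, add_zero]
  have hterm : ∀ m ∈ Finset.range (n + 1),
      ((n : ℝ) + 1) * (((m + 1)! : ℝ)⁻¹ * y ^ (m + 1) * b (n + 1) (m + 1))
      = y * ((m ! : ℝ)⁻¹ * y ^ m * b n m)
        - (n : ℝ) * (((m + 1)! : ℝ)⁻¹ * y ^ (m + 1) * b n (m + 1)) := by
    intro m _
    have hk := hkey m n
    have hm : (m ! : ℝ) ≠ 0 := by exact_mod_cast Nat.factorial_ne_zero m
    have hm1 : ((m : ℝ) + 1) ≠ 0 := by positivity
    have hw : ((m + 1)! : ℝ)⁻¹ * ((m : ℝ) + 1) = (m ! : ℝ)⁻¹ := by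
      rw [show ((m + 1)! : ℝ) = ((m : ℝ) + 1) * (m ! : ℝ) from by
        rw [Nat.factorial_succ]; push_cast; ring]
      field_simp
    linear_combination (((m + 1)! : ℝ)⁻¹ * y ^ (m + 1)) * hk + (y ^ (m + 1) * b n m) * hw
  rw [Finset.sum_congr rfl hterm, Finset.sum_sub_distrib, ← Finset.mul_sum, ← Finset.mul_sum]
  have hshift : ∑ m ∈ Finset.range (n + 1), (((m + 1)! : ℝ)⁻¹ * y ^ (m + 1) * b n (m + 1))
      = (∑ m ∈ Finset.range (n + 1), (m ! : ℝ)⁻¹ * y ^ m * b n m)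
        - (0! : ℝ)⁻¹ * y ^ 0 * b n 0 := by
    have h := Finset.sum_range_succ' (fun m => (m ! : ℝ)⁻¹ * y ^ m * b n m) (n + 1)
    rw [Finset.sum_range_succ _ (n + 1)] at h
    have hv : ((n + 1)! : ℝ)⁻¹ * y ^ (n + 1) * b n (n + 1) = 0 := by
      rw [hvan (n + 1) n (by omega)]; ring
    rw [hv, add_zero] at h
    linarith [h]
  rw [hshift]
  have hc0 : (n : ℝ) * ((0! : ℝ)⁻¹ * y ^ 0 * b n 0) = 0 := by
    rw [hone]
    rcases Nat.eq_zero_or_pos n with h | h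
    · subst h; simp
    · simp [Nat.pos_iff_ne_zero.mp h]
  linear_combination hc0

lemma myB_van : ∀ m n : ℕ, n < m → PowerSeries.coeff n (logOnePlus ^ m) = 0 :=
  fun _ _ h => myCoeff_pow_eq_zero myConstCoeff_log h

lemma myB_one : ∀ n : ℕ, PowerSeries.coeff n (logOnePlus ^ 0) = if n = 0 then 1 else 0 := by
  intro n
  rw [pow_zero, PowerSeries.coeff_one]

lemma fact_cS (y : ℝ) (n : ℕ) :
    (n ! : ℝ) * ∑ m ∈ Finset.range (n + 1),
      (m ! : ℝ)⁻¹ * y ^ m * PowerSeries.coeff n (logOnePlus ^ m) = dFall 1 y n := by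
  induction n with
  | zero => simp [dFall, myB_one]
  | succ n ih =>
    have h := cs_rec y (fun n m => PowerSeries.coeff n (logOnePlus ^ m))
      (fun m n => myKey m n) myB_van myB_one n
    have hn1 : ((n : ℝ) + 1) ≠ 0 := by positivity
    rw [dFall, Finset.prod_range_succ, ← dFall, ← ih]
    have hfac : ((n + 1)! : ℝ) = ((n : ℝ) + 1) * (n ! : ℝ) := by
      rw [Nat.factorial_succ]; push_cast; ring
    rw [hfac]
    push_cast
    linear_combination (n ! : ℝ) * h

lemma stirling_sum (y : ℝ) (n : ℕ) :
    ∑ m ∈ Finset.range (n + 1), stirling1 n m * y ^ m = dFall 1 y n := by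
  rw [← fact_cS y n, Finset.mul_sum]
  refine Finset.sum_congr rfl fun m _ => ?_
  rw [stirling1, map_smul, smul_eq_mul]
  ring

lemma coeff_self_pow {f : ℝ⟦X⟧} (hf : PowerSeries.constantCoeff f = 0) (n : ℕ) :
    PowerSeries.coeff n (f ^ n) = (PowerSeries.coeff 1 f) ^ n := by
  induction n with
  | zero => simp
  | succ n ih =>
    rw [pow_succ, PowerSeries.coeff_mul, Finset.Nat.sum_antidiagonal_eq_sum_range_succ_mk]
    rw [Finset.sum_eq_single n]
    · rw [ih, show n + 1 - n = 1 from by omega, pow_succ]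
    · intro i hi hne
      rcases lt_or_gt_of_ne hne with h | h
      · rw [myCoeff_pow_eq_zero hf h, zero_mul]
      · have hi' : i = n + 1 := by
          simp only [Finset.mem_range] at hi; omega
        subst hi'
        rw [show n + 1 - (n + 1) = 0 from by omega,
          PowerSeries.coeff_zero_eq_constantCoeff, hf, mul_zero]
    · intro h
      exact absurd (Finset.mem_range.2 (by omega)) h

lemma coeff_one_log : PowerSeries.coeff 1 logOnePlus = 1 := by
  simp [logOnePlus]

lemma stirling1_self (n : ℕ) : stirling1 n n = 1 := by
  rw [stirling1, map_smul, smul_eq_mul, coeff_self_pow myConstCoeff_log, coeff_one_log,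
    one_pow, mul_one]
  field_simp

lemma dFall_eq_sum (l x : ℝ) (n : ℕ) :
    dFall l x n = ∑ m ∈ Finset.range (n + 1), stirling1 n m * l ^ (n - m) * x ^ m := by
  rcases eq_or_ne l 0 with rfl | hl
  · rw [show dFall 0 x n = x ^ n from by simp [dFall], Finset.sum_eq_single n]
    · rw [stirling1_self, Nat.sub_self, pow_zero, one_mul, one_mul]
    · intro m hm hne
      have : n - m ≠ 0 := by simp only [Finset.mem_range] at hm; omega
      rw [zero_pow this, mul_zero, zero_mul]
    · intro h
      exact absurd (Finset.mem_range.2 (by omega)) h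
  · have hsc : dFall l x n = l ^ n * dFall 1 (x / l) n := by
      rw [dFall, dFall,
        show l ^ n = ∏ _i ∈ Finset.range n, l from by
          rw [Finset.prod_const, Finset.card_range],
        ← Finset.prod_mul_distrib]
      refine Finset.prod_congr rfl fun i _ => ?_
      field_simp
    rw [hsc, ← stirling_sum (x / l) n, Finset.mul_sum]
    refine Finset.sum_congr rfl fun m hm => ?_
    have hm' : m ≤ n := by simp only [Finset.mem_range] at hm; omega
    have hpow : l ^ n = l ^ (n - m) * l ^ m := by
      rw [← pow_add]; congr 1; omega
    rw [div_pow, hpow]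
    field_simp

lemma dFall_succ' (l z : ℝ) (k : ℕ) : dFall l z (k + 1) = dFall l z k * (z - k * l) :=
  Finset.prod_range_succ _ _

lemma dFall_add (l x y : ℝ) (n : ℕ) :
    dFall l (x + y) n
      = ∑ i ∈ Finset.range (n + 1), (n.choose i : ℝ) * dFall l x i * dFall l y (n - i) := by
  induction n with
  | zero => simp [dFall]
  | succ n ih =>
    have key : ∑ i ∈ Finset.range (n + 2),
          ((n + 1).choose i : ℝ) * dFall l x i * dFall l y (n + 1 - i)
        = ∑ i ∈ Finset.range (n + 1),
            (n.choose i : ℝ) * (dFall l x (i + 1) * dFall l y (n - i)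
              + dFall l x i * dFall l y (n - i + 1)) := by
      rw [Finset.sum_range_succ' _ (n + 1)]
      have e1 : ∀ i ∈ Finset.range (n + 1),
          (((n + 1).choose (i + 1) : ℕ) : ℝ) * dFall l x (i + 1) * dFall l y (n + 1 - (i + 1))
          = (n.choose i : ℝ) * dFall l x (i + 1) * dFall l y (n - i)
            + (n.choose (i + 1) : ℝ) * dFall l x (i + 1) * dFall l y (n - i) := by
        intro i hi
        rw [Nat.choose_succ_succ, show n + 1 - (i + 1) = n - i from by omega]
        push_cast
        ring
      rw [Finset.sum_congr rfl e1, Finset.sum_add_distrib]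
      have e2 : ∑ i ∈ Finset.range (n + 1),
          (n.choose (i + 1) : ℝ) * dFall l x (i + 1) * dFall l y (n - i)
          + (((n + 1).choose 0 : ℕ) : ℝ) * dFall l x 0 * dFall l y (n + 1 - 0)
          = ∑ i ∈ Finset.range (n + 1), (n.choose i : ℝ) * dFall l x i * dFall l y (n - i + 1) := by
        have h3 := Finset.sum_range_succ'
          (fun i => (n.choose i : ℝ) * dFall l x i * dFall l y (n + 1 - i)) (n + 1)
        rw [Finset.sum_range_succ _ (n + 1)] at h3
        simp only [Nat.choose_succ_self, Nat.cast_zero, zero_mul, mul_zero, add_zero] at h3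
        have h4 : ∀ i ∈ Finset.range (n + 1),
            (n.choose (i + 1) : ℝ) * dFall l x (i + 1) * dFall l y (n + 1 - (i + 1))
            = (n.choose (i + 1) : ℝ) * dFall l x (i + 1) * dFall l y (n - i) := by
          intro i hi
          rw [show n + 1 - (i + 1) = n - i from by omega]
        have h5 : ∀ i ∈ Finset.range (n + 1),
            (n.choose i : ℝ) * dFall l x i * dFall l y (n + 1 - i)
            = (n.choose i : ℝ) * dFall l x i * dFall l y (n - i + 1) := by
          intro i hi
          rw [show n + 1 - i = n - i + 1 from by
            simp only [Finset.mem_range] at hi; omega]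
        rw [Finset.sum_congr rfl h4, Finset.sum_congr rfl h5] at h3
        simp only [Nat.choose_zero_right, Nat.cast_one, one_mul] at h3 ⊢
        linarith [h3]
      rw [add_assoc, e2, ← Finset.sum_add_distrib]
      refine Finset.sum_congr rfl fun i _ => ?_
      ring
    rw [key, dFall_succ']
    rw [ih, Finset.sum_mul]
    refine Finset.sum_congr rfl fun i hi => ?_
    have hi' : i ≤ n := by simp only [Finset.mem_range] at hi; omega
    rw [dFall_succ', dFall_succ']
    have hcast : ((n - i : ℕ) : ℝ) = (n : ℝ) - i := by
      push_cast [hi']; ring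
    rw [hcast]
    ring

lemma degExp_mul (l x y : ℝ) : degExp l x * degExp l y = degExp l (x + y) := by
  ext n
  rw [PowerSeries.coeff_mul, Finset.Nat.sum_antidiagonal_eq_sum_range_succ_mk]
  simp only [degExp, PowerSeries.coeff_mk]
  rw [dFall_add, Finset.sum_div]
  refine Finset.sum_congr rfl fun i hi => ?_
  have hi' : i ≤ n := by simp only [Finset.mem_range] at hi; omega
  rw [Nat.cast_choose ℝ hi']
  have h1 : (i ! : ℝ) ≠ 0 := by exact_mod_cast Nat.factorial_ne_zero i
  have h2 : (((n - i)!) : ℝ) ≠ 0 := by exact_mod_cast Nat.factorial_ne_zero (n - i)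
  have h3 : ((n !) : ℝ) ≠ 0 := by exact_mod_cast Nat.factorial_ne_zero n
  field_simp

lemma degExp_zero (l : ℝ) : degExp l 0 = 1 := by
  ext n
  cases n with
  | zero => simp [degExp, dFall]
  | succ k =>
    rw [PowerSeries.coeff_one]
    simp only [degExp, PowerSeries.coeff_mk, Nat.succ_ne_zero, if_false]
    rw [dFall, Finset.prod_eq_zero (Finset.mem_range.2 (Nat.succ_pos k))]
    · simp
    · simp

lemma degExp_pow (l a : ℝ) (j : ℕ) : degExp l a ^ j = degExp l (j * a) := by
  induction j with
  | zero => simp [degExp_zero]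
  | succ j ih =>
    rw [pow_succ, ih, degExp_mul]
    push_cast
    ring_nf

end Aux

/-- explicit formula for the degenerate central factorial numbers of the
second kind in terms of the Stirling numbers of the first kind. -/
theorem degCentFact2_eq (l : ℝ) (n k : ℕ) (hkn : k ≤ n) :
    degCentFact2 l n k =
      ∑ m ∈ Finset.range (n + 1),
        ((k ! : ℝ)⁻¹ * ∑ j ∈ Finset.range (k + 1),
            (k.choose j : ℝ) * (-1) ^ (k - j) * ((j : ℝ) - (k : ℝ) / 2) ^ m) *
          l ^ (n - m) * stirling1 n m := by
  have hn : (n ! : ℝ) ≠ 0 := by exact_mod_cast Nat.factorial_ne_zero n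
  have hterm : ∀ j ∈ Finset.range (k + 1),
      (-1 : ℝ⟦X⟧) ^ (j + k) * degExp l (1 / 2) ^ j * degExp l (-(1 / 2)) ^ (k - j)
          * ((k.choose j : ℕ) : ℝ⟦X⟧)
      = ((-1 : ℝ) ^ (k - j) * (k.choose j : ℝ)) • degExp l ((j : ℝ) - (k : ℝ) / 2) := by
    intro j hj
    have hj' : j ≤ k := by simp only [Finset.mem_range] at hj; omega
    rw [degExp_pow, degExp_pow, mul_assoc ((-1 : ℝ⟦X⟧) ^ (j + k)) _ _, degExp_mul,
      show ((j : ℝ)) * (1 / 2) + ((k - j : ℕ) : ℝ) * (-(1 / 2)) = (j : ℝ) - (k : ℝ) / 2 from by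
        rw [Nat.cast_sub hj']; ring,
      PowerSeries.smul_eq_C_mul,
      show (-1 : ℝ) ^ (k - j) = (-1 : ℝ) ^ (j + k) from by
        rw [show j + k = (k - j) + 2 * j from by omega, pow_add, pow_mul]; simp]
    rw [map_mul, map_pow, map_neg, map_one, map_natCast]
    ring
  rw [degCentFact2, sub_pow, Finset.sum_congr rfl hterm, map_smul, smul_eq_mul, map_sum]
  have hco : ∀ j ∈ Finset.range (k + 1),
      PowerSeries.coeff n (((-1 : ℝ) ^ (k - j) * (k.choose j : ℝ))
          • degExp l ((j : ℝ) - (k : ℝ) / 2))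
      = ((-1 : ℝ) ^ (k - j) * (k.choose j : ℝ))
          * (dFall l ((j : ℝ) - (k : ℝ) / 2) n / (n ! : ℝ)) := by
    intro j _
    rw [map_smul, smul_eq_mul, degExp, PowerSeries.coeff_mk]
  rw [Finset.sum_congr rfl hco]
  rw [Finset.mul_sum, Finset.mul_sum]
  have hLHS : ∀ j ∈ Finset.range (k + 1),
      (n ! : ℝ) * ((k ! : ℝ)⁻¹ * (((-1 : ℝ) ^ (k - j) * (k.choose j : ℝ))
        * (dFall l ((j : ℝ) - (k : ℝ) / 2) n / (n ! : ℝ))))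
      = ∑ m ∈ Finset.range (n + 1), (k ! : ℝ)⁻¹ * ((k.choose j : ℝ) * (-1) ^ (k - j)
          * ((j : ℝ) - (k : ℝ) / 2) ^ m) * l ^ (n - m) * stirling1 n m := by
    intro j _
    rw [dFall_eq_sum, Finset.sum_div, Finset.mul_sum, Finset.mul_sum, Finset.mul_sum]
    refine Finset.sum_congr rfl fun m _ => ?_
    field_simp
  rw [Finset.sum_congr rfl hLHS, Finset.sum_comm]
  refine Finset.sum_congr rfl fun m _ => ?_
  rw [Finset.mul_sum, Finset.sum_mul, Finset.sum_mul]
end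

section
/- For integers n ≥ k ≥ 0 with n - k ≡ 0 (mod 2) and λ ∈ ℝ, the degenerate central incomplete Bell polynomial satisfies the explicit formula T_{n,k}(x₁,…,x_{n-k+1}|λ) = ∑ n!/(i₁!⋯i_{n-k+1}!) · ∏_{j=1}^{n-k+1} ( x_j ((1/2)_{j,λ} - (-1)^j⟨1/2⟩_{j,λ}) / j! )^{i_j}, where the summation is over all nonnegative integers i₁,…,i_{n-k+1} with i₁+i₂+⋯+i_{n-k+1} = k and i₁+2i₂+⋯+(n-k+1)i_{n-k+1} = n. -/
open PowerSeries Finset Nat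

section TnkAux


private lemma tnk_reindex_prod {M : Type*} [CommMonoid M] (n k : ℕ) (i : ℕ → ℕ)
    (hi : ∀ m, i m ≠ 0 → 1 ≤ m ∧ m ≤ n - k + 1 ∧ m ≤ n) (F : ℕ → ℕ → M)
    (hF : ∀ m, F m 0 = 1) :
    ∏ m ∈ Finset.Icc 1 n, F m (i m) = ∏ j : Fin (n - k + 1), F (j.1 + 1) (i (j.1 + 1)) := by
  have h1 : ∏ j : Fin (n - k + 1), F (j.1 + 1) (i (j.1 + 1))
      = ∏ m ∈ Finset.Icc 1 (n - k + 1), F m (i m) := by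
    rw [Fin.prod_univ_eq_prod_range (fun j => F (j + 1) (i (j + 1))),
      show Finset.Icc 1 (n - k + 1) = Finset.Ico 1 (n - k + 2) from (Finset.Ico_add_one_right_eq_Icc 1 _).symm,
      Finset.prod_Ico_eq_prod_range]
    simp [add_comm 1]
  have h2 : ∏ m ∈ Finset.Icc 1 n, F m (i m)
      = ∏ m ∈ Finset.Icc 1 (min n (n - k + 1)), F m (i m) := by
    refine (Finset.prod_subset (Finset.Icc_subset_Icc_right (min_le_left _ _)) ?_).symm
    intro m hm hm'
    rw [Finset.mem_Icc] at hm hm'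
    have : i m = 0 := by
      by_contra h0
      have := hi m h0
      omega
    rw [this, hF]
  have h3 : ∏ m ∈ Finset.Icc 1 (n - k + 1), F m (i m)
      = ∏ m ∈ Finset.Icc 1 (min n (n - k + 1)), F m (i m) := by
    refine (Finset.prod_subset (Finset.Icc_subset_Icc_right (min_le_right _ _)) ?_).symm
    intro m hm hm'
    rw [Finset.mem_Icc] at hm hm'
    have : i m = 0 := by
      by_contra h0
      have := hi m h0
      omega
    rw [this, hF]
  rw [h1, h2, h3]

private lemma tnk_reindex_sum (n k : ℕ) (i : ℕ → ℕ)
    (hi : ∀ m, i m ≠ 0 → 1 ≤ m ∧ m ≤ n - k + 1 ∧ m ≤ n) (F : ℕ → ℕ → ℕ)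
    (hF : ∀ m, F m 0 = 0) :
    ∑ m ∈ Finset.Icc 1 n, F m (i m) = ∑ j : Fin (n - k + 1), F (j.1 + 1) (i (j.1 + 1)) := by
  have h1 : ∑ j : Fin (n - k + 1), F (j.1 + 1) (i (j.1 + 1))
      = ∑ m ∈ Finset.Icc 1 (n - k + 1), F m (i m) := by
    rw [Fin.sum_univ_eq_sum_range (fun j => F (j + 1) (i (j + 1))),
      show Finset.Icc 1 (n - k + 1) = Finset.Ico 1 (n - k + 2) from (Finset.Ico_add_one_right_eq_Icc 1 _).symm,
      Finset.sum_Ico_eq_sum_range]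
    simp [add_comm 1]
  have h2 : ∑ m ∈ Finset.Icc 1 n, F m (i m)
      = ∑ m ∈ Finset.Icc 1 (min n (n - k + 1)), F m (i m) := by
    refine (Finset.sum_subset (Finset.Icc_subset_Icc_right (min_le_left _ _)) ?_).symm
    intro m hm hm'
    rw [Finset.mem_Icc] at hm hm'
    have : i m = 0 := by
      by_contra h0
      have := hi m h0
      omega
    rw [this, hF]
  have h3 : ∑ m ∈ Finset.Icc 1 (n - k + 1), F m (i m)
      = ∑ m ∈ Finset.Icc 1 (min n (n - k + 1)), F m (i m) := by
    refine (Finset.sum_subset (Finset.Icc_subset_Icc_right (min_le_right _ _)) ?_).symm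
    intro m hm hm'
    rw [Finset.mem_Icc] at hm hm'
    have : i m = 0 := by
      by_contra h0
      have := hi m h0
      omega
    rw [this, hF]
  rw [h1, h2, h3]


private def tnkPhi (n k : ℕ) (i : ℕ → ℕ) : Fin (n - k + 1) → ℕ := fun j => i (j.1 + 1)

private def tnkPsi (n k : ℕ) (v : Fin (n - k + 1) → ℕ) : ℕ → ℕ := fun m =>
  if h : 1 ≤ m ∧ m - 1 < n - k + 1 then v ⟨m - 1, h.2⟩ else 0

private lemma tnkPsi_succ (n k : ℕ) (v : Fin (n - k + 1) → ℕ) (j : Fin (n - k + 1)) :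
    tnkPsi n k v (j.1 + 1) = v j := by
  rw [tnkPsi, dif_pos ⟨Nat.le_add_left _ _, by simpa using j.2⟩]
  exact congrArg v (Fin.ext (show j.1 + 1 - 1 = j.1 by omega))

private lemma tnk_coeff_pow (a : ℕ → ℝ) (n k : ℕ) (hkn : k ≤ n) :
    PowerSeries.coeff n ((PowerSeries.mk fun m => if m = 0 then 0 else a m) ^ k)
      = ∑ v ∈ partIdx n k, ((k ! : ℝ) / ∏ j, ((v j)! : ℝ)) * ∏ j, a (j.1 + 1) ^ v j := by
  classical
  set g : PowerSeries ℝ := ∑ m ∈ Finset.Icc 1 n, PowerSeries.C (a m) * PowerSeries.X ^ m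
    with hgdef
  -- Step 1: up to degree n, our series agrees with the polynomial g
  have hcoe : ∀ jj : ℕ, jj ≤ n →
      PowerSeries.coeff jj (PowerSeries.mk fun m => if m = 0 then 0 else a m)
        = PowerSeries.coeff jj g := by
    intro jj hjj
    rw [hgdef, map_sum, PowerSeries.coeff_mk]
    simp only [PowerSeries.coeff_C_mul, PowerSeries.coeff_X_pow, mul_ite, mul_one, mul_zero]
    rw [Finset.sum_ite_eq (Finset.Icc 1 n) jj a]
    by_cases h0 : jj = 0
    · simp [h0]
    · simp [Finset.mem_Icc, h0, Nat.one_le_iff_ne_zero.mpr h0, hjj]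
  have hfg : PowerSeries.coeff n ((PowerSeries.mk fun m => if m = 0 then 0 else a m) ^ k)
      = PowerSeries.coeff n (g ^ k) := by
    rw [PowerSeries.coeff_pow, PowerSeries.coeff_pow]
    refine Finset.sum_congr rfl fun l hl => Finset.prod_congr rfl fun t ht => ?_
    obtain ⟨h1, _⟩ := Finset.mem_finsuppAntidiag.mp hl
    exact hcoe _ (h1 ▸ Finset.single_le_sum (f := fun t => l t) (fun _ _ => Nat.zero_le _) ht)
  -- Step 2: expand g ^ k by the multinomial theorem
  have hgk : PowerSeries.coeff n (g ^ k)
      = ∑ i ∈ (Finset.Icc 1 n).piAntidiag k,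
          if (∑ m ∈ Finset.Icc 1 n, m * i m) = n then
            (Nat.multinomial (Finset.Icc 1 n) i : ℝ) * ∏ m ∈ Finset.Icc 1 n, a m ^ i m
          else 0 := by
    rw [hgdef, Finset.sum_pow_eq_sum_piAntidiag, map_sum]
    refine Finset.sum_congr rfl fun i _ => ?_
    have hpr : ∏ m ∈ Finset.Icc 1 n, (PowerSeries.C (a m) * PowerSeries.X ^ m) ^ i m
        = PowerSeries.C (∏ m ∈ Finset.Icc 1 n, a m ^ i m)
            * PowerSeries.X ^ (∑ m ∈ Finset.Icc 1 n, m * i m) := by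
      rw [map_prod, ← Finset.prod_pow_eq_pow_sum, ← Finset.prod_mul_distrib]
      refine Finset.prod_congr rfl fun m _ => ?_
      rw [mul_pow, map_pow, pow_mul]
    rw [hpr, ← map_natCast (PowerSeries.C), ← mul_assoc, ← map_mul,
      PowerSeries.coeff_C_mul, PowerSeries.coeff_X_pow]
    by_cases h : (∑ m ∈ Finset.Icc 1 n, m * i m) = n
    · simp [h]
    · simp [h, Ne.symm h]
  rw [hfg, hgk, ← Finset.sum_filter]
  -- Step 3: the support of any index in the filtered set is inside [1, n-k+1]
  set S := ((Finset.Icc 1 n).piAntidiag k).filter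
    (fun i => ∑ m ∈ Finset.Icc 1 n, m * i m = n) with hSdef
  have hsupp : ∀ i ∈ S, ∀ m, i m ≠ 0 → 1 ≤ m ∧ m ≤ n - k + 1 ∧ m ≤ n := by
    intro i hiS m hm
    obtain ⟨hpi, hw⟩ := Finset.mem_filter.mp hiS
    obtain ⟨hsum, hsup⟩ := Finset.mem_piAntidiag.mp hpi
    have hmem := hsup m hm
    have hmem' := Finset.mem_Icc.mp hmem
    refine ⟨hmem'.1, ?_, hmem'.2⟩
    have e1 : ∑ m' ∈ Finset.Icc 1 n, m' * i m'
        = (∑ m' ∈ Finset.Icc 1 n, i m') + ∑ m' ∈ Finset.Icc 1 n, (m' - 1) * i m' := by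
      rw [← Finset.sum_add_distrib]
      refine Finset.sum_congr rfl fun m' hm' => ?_
      have h1 : 1 ≤ m' := (Finset.mem_Icc.mp hm').1
      obtain ⟨c, hc⟩ := Nat.exists_eq_add_of_le h1
      subst hc
      have hc1 : 1 + c - 1 = c := by omega
      rw [hc1, add_mul, one_mul]
    have e2 : (m - 1) * i m ≤ ∑ m' ∈ Finset.Icc 1 n, (m' - 1) * i m' :=
      Finset.single_le_sum (f := fun m' => (m' - 1) * i m') (fun _ _ => Nat.zero_le _) hmem
    have e3 : m - 1 ≤ (m - 1) * i m :=
      Nat.le_mul_of_pos_right _ (Nat.pos_of_ne_zero hm)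
    have e4 : k + (m - 1) ≤ n := by
      calc k + (m - 1) ≤ k + (m - 1) * i m := Nat.add_le_add_left e3 k
        _ ≤ k + ∑ m' ∈ Finset.Icc 1 n, (m' - 1) * i m' := Nat.add_le_add_left e2 k
        _ = n := by rw [← hsum, ← e1, hw]
    omega
  -- Step 4: reindex the sum via the bijection with partIdx
  refine Finset.sum_nbij' (tnkPhi n k) (tnkPsi n k) ?_ ?_ ?_ ?_ ?_
  · -- maps into partIdx
    intro i hiS
    have hs := hsupp i hiS
    obtain ⟨hpi, hw⟩ := Finset.mem_filter.mp hiS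
    obtain ⟨hsum, hsup⟩ := Finset.mem_piAntidiag.mp hpi
    rw [partIdx, Finset.mem_filter]
    refine ⟨?_, ?_, ?_⟩
    · rw [Fintype.mem_piFinset]
      intro j
      rw [Finset.mem_range]
      show i (j.1 + 1) < n + 1
      by_cases h0 : i (j.1 + 1) = 0
      · omega
      · have hb := hs (j.1 + 1) h0
        have := Finset.single_le_sum (f := i) (fun _ _ => Nat.zero_le _)
          (Finset.mem_Icc.mpr ⟨Nat.le_add_left 1 j.1, hb.2.2⟩)
        have hsum' : (∑ x ∈ Finset.Icc 1 n, i x) = k := hsum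
        omega
    · show (∑ j : Fin (n - k + 1), i (j.1 + 1)) = k
      calc (∑ j : Fin (n - k + 1), i (j.1 + 1))
          = ∑ m ∈ Finset.Icc 1 n, i m :=
            (tnk_reindex_sum n k i hs (fun _ c => c) (fun _ => rfl)).symm
        _ = k := hsum
    · show (∑ j : Fin (n - k + 1), (j.1 + 1) * i (j.1 + 1)) = n
      calc (∑ j : Fin (n - k + 1), (j.1 + 1) * i (j.1 + 1))
          = ∑ m ∈ Finset.Icc 1 n, m * i m :=
            (tnk_reindex_sum n k i hs (fun m c => m * c) (fun m => mul_zero m)).symm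
        _ = n := hw
  · -- maps back into S
    intro v hv
    rw [partIdx, Finset.mem_filter] at hv
    have hsumv := hv.2.1
    have hwv := hv.2.2
    have hvsupp : ∀ j : Fin (n - k + 1), v j ≠ 0 → j.1 + 1 ≤ n := by
      intro j hj0
      have h1 : (j.1 + 1) * v j ≤ ∑ j', (j'.1 + 1) * v j' :=
        Finset.single_le_sum (f := fun j' : Fin (n - k + 1) => (j'.1 + 1) * v j')
          (fun _ _ => Nat.zero_le _) (Finset.mem_univ j)
      have h2 : j.1 + 1 ≤ (j.1 + 1) * v j :=
        Nat.le_mul_of_pos_right _ (Nat.pos_of_ne_zero hj0)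
      omega
    have hssupp : ∀ m, tnkPsi n k v m ≠ 0 → 1 ≤ m ∧ m ≤ n - k + 1 ∧ m ≤ n := by
      intro m hm
      rw [tnkPsi] at hm
      by_cases h : 1 ≤ m ∧ m - 1 < n - k + 1
      · rw [dif_pos h] at hm
        have := hvsupp ⟨m - 1, h.2⟩ hm
        simp only at this
        omega
      · rw [dif_neg h] at hm
        exact absurd rfl hm
    rw [hSdef, Finset.mem_filter, Finset.mem_piAntidiag]
    refine ⟨⟨?_, fun m hm0 => Finset.mem_Icc.mpr ⟨(hssupp m hm0).1, (hssupp m hm0).2.2⟩⟩, ?_⟩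
    · calc ∑ m ∈ Finset.Icc 1 n, tnkPsi n k v m
          = ∑ j : Fin (n - k + 1), tnkPsi n k v (j.1 + 1) :=
            tnk_reindex_sum n k _ hssupp (fun _ c => c) (fun _ => rfl)
        _ = ∑ j, v j := Finset.sum_congr rfl fun j _ => tnkPsi_succ n k v j
        _ = k := hsumv
    · calc ∑ m ∈ Finset.Icc 1 n, m * tnkPsi n k v m
          = ∑ j : Fin (n - k + 1), (j.1 + 1) * tnkPsi n k v (j.1 + 1) :=
            tnk_reindex_sum n k _ hssupp (fun m c => m * c) (fun m => mul_zero m)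
        _ = ∑ j, (j.1 + 1) * v j :=
            Finset.sum_congr rfl fun j _ => by rw [tnkPsi_succ n k v j]
        _ = n := hwv
  · -- left inverse
    intro i hiS
    funext m
    rw [tnkPsi]
    by_cases h : 1 ≤ m ∧ m - 1 < n - k + 1
    · rw [dif_pos h]
      show i (m - 1 + 1) = i m
      exact congrArg i (by omega)
    · rw [dif_neg h]
      by_contra h0
      have := hsupp i hiS m fun hh => h0 hh.symm
      omega
  · -- right inverse
    intro v _
    funext j
    exact tnkPsi_succ n k v j
  · -- terms agree
    intro i hiS
    have hs := hsupp i hiS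
    obtain ⟨hpi, hw⟩ := Finset.mem_filter.mp hiS
    obtain ⟨hsum, _⟩ := Finset.mem_piAntidiag.mp hpi
    have hfac : ∏ m ∈ Finset.Icc 1 n, ((i m)! : ℝ) = ∏ j : Fin (n - k + 1), ((i (j.1 + 1))! : ℝ) :=
      tnk_reindex_prod n k i hs (fun _ c => ((c)! : ℝ)) (fun _ => by simp)
    have hpow : ∏ m ∈ Finset.Icc 1 n, a m ^ i m
        = ∏ j : Fin (n - k + 1), a (j.1 + 1) ^ i (j.1 + 1) :=
      tnk_reindex_prod n k i hs (fun m c => a m ^ c) (fun m => pow_zero _)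
    have hne : (∏ m ∈ Finset.Icc 1 n, ((i m)! : ℝ)) ≠ 0 :=
      Finset.prod_ne_zero_iff.mpr fun m _ => Nat.cast_ne_zero.mpr (Nat.factorial_ne_zero _)
    have hnat : Nat.multinomial (Finset.Icc 1 n) i * ∏ m ∈ Finset.Icc 1 n, (i m)! = k ! := by
      rw [mul_comm, Nat.multinomial_spec, hsum]
    have hmc : (Nat.multinomial (Finset.Icc 1 n) i : ℝ)
        = (k ! : ℝ) / ∏ m ∈ Finset.Icc 1 n, ((i m)! : ℝ) := by
      rw [eq_div_iff hne]
      exact_mod_cast congrArg (Nat.cast : ℕ → ℝ) hnat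
    show (Nat.multinomial (Finset.Icc 1 n) i : ℝ) * ∏ m ∈ Finset.Icc 1 n, a m ^ i m
        = ((k ! : ℝ) / ∏ j : Fin (n - k + 1), ((i (j.1 + 1))! : ℝ))
            * ∏ j : Fin (n - k + 1), a (j.1 + 1) ^ i (j.1 + 1)
    rw [hmc, hpow, hfac]


/-- explicit formula for the degenerate central incomplete Bell polynomials. -/
theorem degCentIncBell_explicit (l : ℝ) (x : ℕ → ℝ) (n k : ℕ) (hkn : k ≤ n)
    (hpar : Even ((n : ℤ) - k)) :
    degCentIncBell l x n k =
      ∑ i ∈ partIdx n k,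
        ((n ! : ℝ) / ∏ j, ((i j)! : ℝ)) *
          ∏ j, (x (j.1 + 1) *
              (dFall l (1 / 2) (j.1 + 1) - (-1) ^ (j.1 + 1) * dRise l (1 / 2) (j.1 + 1)) /
                ((j.1 + 1)! : ℝ)) ^ i j := by
  have key := tnk_coeff_pow
    (fun m => x m * (dFall l (1 / 2) m - (-1) ^ m * dRise l (1 / 2) m) / (m ! : ℝ)) n k hkn
  rw [degCentIncBell, map_smul, smul_eq_mul, centralSeq, key, Finset.mul_sum, Finset.mul_sum]
  refine Finset.sum_congr rfl fun v _ => ?_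
  have hk : (k ! : ℝ) ≠ 0 := Nat.cast_ne_zero.mpr (Nat.factorial_ne_zero _)
  have hP : (∏ j, ((v j)! : ℝ)) ≠ 0 :=
    Finset.prod_ne_zero_iff.mpr fun j _ => Nat.cast_ne_zero.mpr (Nat.factorial_ne_zero _)
  field_simp

end TnkAux
end

section
/- (Corollary 2.3, second part) For integers n ≥ k ≥ 0 with n - k ≡ 0 (mod 2) and λ ∈ ℝ, the degenerate central factorial number of the second kind satisfies T_{2,λ}(n,k) = T_{n,k}(1,1,…,1|λ) = ∑ n!/(i₁!⋯i_{n-k+1}!) · ∏_{j=1}^{n-k+1} ( ((1/2)_{j,λ} - (-1)^j⟨1/2⟩_{j,λ}) / j! )^{i_j}, where the summation is over all nonnegative integers i₁,…,i_{n-k+1} with i₁+i₂+⋯+i_{n-k+1} = k and i₁+2i₂+⋯+(n-k+1)i_{n-k+1} = n. -/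
open PowerSeries Finset Nat

section Aux

private lemma prod_icc_eq_prod_fin {M : Type*} [CommMonoid M] (t : ℕ → M) (n N : ℕ)
    (h : ∀ m, 1 ≤ m → (n < m ∨ N < m) → t m = 1) :
    ∏ m ∈ Finset.Icc 1 n, t m = ∏ j : Fin N, t (j.1 + 1) := by
  have h1 : ∏ m ∈ Finset.Icc 1 n, t m = ∏ m ∈ Finset.Icc 1 (max n N), t m :=
    Finset.prod_subset (Finset.Icc_subset_Icc_right (le_max_left _ _)) (by
      intro x hx hnx
      simp only [Finset.mem_Icc] at hx hnx
      exact h x hx.1 (Or.inl (by omega)))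
  have h2 : ∏ m ∈ Finset.Icc 1 N, t m = ∏ m ∈ Finset.Icc 1 (max n N), t m :=
    Finset.prod_subset (Finset.Icc_subset_Icc_right (le_max_right _ _)) (by
      intro x hx hnx
      simp only [Finset.mem_Icc] at hx hnx
      exact h x hx.1 (Or.inr (by omega)))
  rw [h1, ← h2, ← Finset.Ico_add_one_right_eq_Icc, Finset.prod_Ico_eq_prod_range,
    show (∏ j : Fin N, t (j.1 + 1)) = ∏ m ∈ Finset.range N, t (m + 1) from
      Fin.prod_univ_eq_prod_range (fun m => t (m + 1)) N,
    Nat.add_one_sub_one]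
  exact Finset.prod_congr rfl fun j _ => by rw [Nat.add_comm]

private lemma sum_icc_eq_sum_fin {M : Type*} [AddCommMonoid M] (t : ℕ → M) (n N : ℕ)
    (h : ∀ m, 1 ≤ m → (n < m ∨ N < m) → t m = 0) :
    ∑ m ∈ Finset.Icc 1 n, t m = ∑ j : Fin N, t (j.1 + 1) := by
  have h1 : ∑ m ∈ Finset.Icc 1 n, t m = ∑ m ∈ Finset.Icc 1 (max n N), t m :=
    Finset.sum_subset (Finset.Icc_subset_Icc_right (le_max_left _ _)) (by
      intro x hx hnx
      simp only [Finset.mem_Icc] at hx hnx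
      exact h x hx.1 (Or.inl (by omega)))
  have h2 : ∑ m ∈ Finset.Icc 1 N, t m = ∑ m ∈ Finset.Icc 1 (max n N), t m :=
    Finset.sum_subset (Finset.Icc_subset_Icc_right (le_max_right _ _)) (by
      intro x hx hnx
      simp only [Finset.mem_Icc] at hx hnx
      exact h x hx.1 (Or.inr (by omega)))
  rw [h1, ← h2, ← Finset.Ico_add_one_right_eq_Icc, Finset.sum_Ico_eq_sum_range,
    show (∑ j : Fin N, t (j.1 + 1)) = ∑ m ∈ Finset.range N, t (m + 1) from
      Fin.sum_univ_eq_sum_range (fun m => t (m + 1)) N,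
    Nat.add_one_sub_one]
  exact Finset.sum_congr rfl fun j _ => by rw [Nat.add_comm]

private lemma key_expand (ps : PowerSeries ℝ) (c : ℕ → ℝ) (n k : ℕ) (hkn : k ≤ n)
    (h0 : PowerSeries.coeff 0 ps = 0)
    (hc : ∀ m, 1 ≤ m → m ≤ n → PowerSeries.coeff m ps = c m) :
    (n ! : ℝ) * PowerSeries.coeff n ((k ! : ℝ)⁻¹ • ps ^ k) =
      ∑ i ∈ partIdx n k,
        ((n ! : ℝ) / ∏ j, ((i j)! : ℝ)) * ∏ j, (c (j.1 + 1)) ^ i j := by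
  classical
  set S : PowerSeries ℝ :=
    ∑ m ∈ Finset.Icc 1 n, PowerSeries.C (c m) * PowerSeries.X ^ m with hSdef
  have hcoeffS : ∀ m, PowerSeries.coeff m S =
      if m ∈ Finset.Icc 1 n then c m else 0 := by
    intro m
    rw [hSdef, map_sum]
    rw [Finset.sum_congr rfl (fun j _ => by
      rw [PowerSeries.coeff_C_mul, PowerSeries.coeff_X_pow, mul_ite, mul_one, mul_zero])]
    exact Finset.sum_ite_eq (Finset.Icc 1 n) m c
  have hcoeffn : PowerSeries.coeff n (ps ^ k) = PowerSeries.coeff n (S ^ k) := by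
    have h1 : (PowerSeries.X : PowerSeries ℝ) ^ (n + 1) ∣ ps - S := by
      rw [PowerSeries.X_pow_dvd_iff]
      intro m hm
      rw [map_sub, hcoeffS]
      split_ifs with h
      · simp only [Finset.mem_Icc] at h
        rw [hc m h.1 h.2, sub_self]
      · simp only [Finset.mem_Icc, not_and, not_le] at h
        have hm0 : m = 0 := by omega
        rw [hm0, h0, sub_zero]
    have h2 := h1.trans (sub_dvd_pow_sub_pow ps S k)
    have h3 := (PowerSeries.X_pow_dvd_iff.mp h2) n (by omega)
    rw [map_sub] at h3
    linarith
  have hSk : S ^ k = ∑ g ∈ (Finset.Icc 1 n).piAntidiag k,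
      (Nat.multinomial (Finset.Icc 1 n) g : PowerSeries ℝ) *
        (PowerSeries.C (∏ m ∈ Finset.Icc 1 n, c m ^ g m) *
          PowerSeries.X ^ (∑ m ∈ Finset.Icc 1 n, m * g m)) := by
    rw [hSdef, Finset.sum_pow_eq_sum_piAntidiag]
    refine Finset.sum_congr rfl fun g hg => ?_
    congr 1
    calc ∏ m ∈ Finset.Icc 1 n, (PowerSeries.C (c m) * PowerSeries.X ^ m) ^ g m
        = ∏ m ∈ Finset.Icc 1 n,
            (PowerSeries.C (c m ^ g m) * PowerSeries.X ^ (m * g m)) :=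
          Finset.prod_congr rfl fun m _ => by rw [mul_pow, ← map_pow, ← pow_mul]
      _ = (∏ m ∈ Finset.Icc 1 n, PowerSeries.C (c m ^ g m)) *
            ∏ m ∈ Finset.Icc 1 n, PowerSeries.X ^ (m * g m) := Finset.prod_mul_distrib
      _ = _ := by rw [← map_prod, Finset.prod_pow_eq_pow_sum]
  have hterm : ∀ g : ℕ → ℕ,
      PowerSeries.coeff n ((Nat.multinomial (Finset.Icc 1 n) g : PowerSeries ℝ) *
        (PowerSeries.C (∏ m ∈ Finset.Icc 1 n, c m ^ g m) *
          PowerSeries.X ^ (∑ m ∈ Finset.Icc 1 n, m * g m))) =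
      if (∑ m ∈ Finset.Icc 1 n, m * g m) = n then
        (Nat.multinomial (Finset.Icc 1 n) g : ℝ) * ∏ m ∈ Finset.Icc 1 n, c m ^ g m
      else 0 := by
    intro g
    rw [← map_natCast (PowerSeries.C (R := ℝ)), ← mul_assoc, ← map_mul,
      PowerSeries.coeff_C_mul, PowerSeries.coeff_X_pow]
    by_cases h : (∑ m ∈ Finset.Icc 1 n, m * g m) = n
    · simp [h]
    · simp [h, Ne.symm h]
  set A : Finset (ℕ → ℕ) := ((Finset.Icc 1 n).piAntidiag k).filter
    (fun g => ∑ m ∈ Finset.Icc 1 n, m * g m = n) with hAdef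
  have hmain : (n ! : ℝ) * PowerSeries.coeff n ((k ! : ℝ)⁻¹ • ps ^ k) =
      ∑ g ∈ A, (n ! : ℝ) * ((k ! : ℝ)⁻¹ *
        ((Nat.multinomial (Finset.Icc 1 n) g : ℝ) *
          ∏ m ∈ Finset.Icc 1 n, c m ^ g m)) := by
    rw [map_smul, smul_eq_mul, hcoeffn, hSk, map_sum]
    rw [Finset.sum_congr rfl fun g _ => hterm g]
    rw [hAdef, Finset.sum_filter, Finset.mul_sum, Finset.mul_sum]
    refine Finset.sum_congr rfl fun g _ => ?_
    split_ifs with h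
    · ring
    · ring
  rw [hmain]
  -- vanishing facts for elements of `A`
  have hvanA : ∀ g ∈ A, ∀ m, 1 ≤ m → (n < m ∨ n - k + 1 < m) → g m = 0 := by
    intro g hg
    rw [hAdef, Finset.mem_filter, Finset.mem_piAntidiag] at hg
    obtain ⟨⟨hgsum, hgsupp⟩, hgn⟩ := hg
    have hvan : ∀ m, n - k + 1 < m → g m = 0 := by
      intro m hm
      by_contra hgm
      have hmem := hgsupp m hgm
      rw [Finset.mem_Icc] at hmem
      have hsplit : ∑ m' ∈ Finset.Icc 1 n, m' * g m' =
          (∑ m' ∈ Finset.Icc 1 n, g m') + ∑ m' ∈ Finset.Icc 1 n, (m' - 1) * g m' := by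
        rw [← Finset.sum_add_distrib]
        refine Finset.sum_congr rfl fun x hx => ?_
        rw [Finset.mem_Icc] at hx
        obtain ⟨y, rfl⟩ : ∃ y, x = y + 1 := ⟨x - 1, by omega⟩
        simp only [Nat.add_sub_cancel, Nat.add_mul, Nat.one_mul]
        omega
      have hsingle : (m - 1) * g m ≤ ∑ m' ∈ Finset.Icc 1 n, (m' - 1) * g m' :=
        Finset.single_le_sum (f := fun m' => (m' - 1) * g m')
          (fun _ _ => Nat.zero_le _) (Finset.mem_Icc.mpr hmem)
      have hgm1 : 1 ≤ g m := Nat.one_le_iff_ne_zero.mpr hgm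
      have hlow : m - 1 ≤ (m - 1) * g m := Nat.le_mul_of_pos_right _ hgm1
      have hgsum' : ∑ m' ∈ Finset.Icc 1 n, g m' = k := hgsum
      omega
    intro m h1 h2
    rcases h2 with h2 | h2
    · by_contra hgm
      have := hgsupp m hgm
      rw [Finset.mem_Icc] at this
      omega
    · exact hvan m h2
  refine Finset.sum_nbij' (fun g => fun j : Fin (n - k + 1) => g (j.1 + 1))
    (fun i => fun m => if h : 1 ≤ m ∧ m - 1 < n - k + 1 then i ⟨m - 1, h.2⟩ else 0)
    ?_ ?_ ?_ ?_ ?_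
  · -- maps A into partIdx
    intro g hg
    have hvan' := hvanA g hg
    rw [hAdef, Finset.mem_filter, Finset.mem_piAntidiag] at hg
    obtain ⟨⟨hgsum, hgsupp⟩, hgn⟩ := hg
    have hle : ∀ j : Fin (n - k + 1), g (j.1 + 1) ≤ k := by
      intro j
      rcases Nat.eq_zero_or_pos (g (j.1 + 1)) with h | h
      · omega
      · have hmem := hgsupp (j.1 + 1) (by omega)
        calc g (j.1 + 1) ≤ ∑ m ∈ Finset.Icc 1 n, g m :=
              Finset.single_le_sum (f := g) (fun _ _ => Nat.zero_le _) hmem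
          _ = k := hgsum
    simp only [partIdx, Finset.mem_filter, Fintype.mem_piFinset, Finset.mem_range]
    refine ⟨fun j => by have := hle j; omega, ?_, ?_⟩
    · rw [← sum_icc_eq_sum_fin (fun m => g m) n (n - k + 1)
        (fun m h1 h2 => by show g m = 0; exact hvan' m h1 h2)]
      exact hgsum
    · rw [← sum_icc_eq_sum_fin (fun m => m * g m) n (n - k + 1)
        (fun m h1 h2 => by show m * g m = 0; rw [hvan' m h1 h2, Nat.mul_zero])]
      exact hgn
  · -- maps partIdx into A
    intro i hi
    simp only [partIdx, Finset.mem_filter, Fintype.mem_piFinset, Finset.mem_range] at hi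
    obtain ⟨hpi, hisum, hiw⟩ := hi
    have hkpos : ∀ j : Fin (n - k + 1), i j ≤ k := by
      intro j
      calc i j ≤ ∑ j', i j' :=
            Finset.single_le_sum (f := i) (fun _ _ => Nat.zero_le _) (Finset.mem_univ j)
        _ = k := hisum
    have hGeq : ∀ j : Fin (n - k + 1),
        (if h : 1 ≤ j.1 + 1 ∧ j.1 + 1 - 1 < n - k + 1 then i ⟨j.1 + 1 - 1, h.2⟩ else 0)
          = i j := by
      intro j
      rw [dif_pos ⟨by omega, by simp only [Nat.add_sub_cancel]; exact j.2⟩]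
      exact congrArg i (Fin.ext (by simp))
    have hvanG : ∀ m, 1 ≤ m → (n < m ∨ n - k + 1 < m) →
        (if h : 1 ≤ m ∧ m - 1 < n - k + 1 then i ⟨m - 1, h.2⟩ else 0) = 0 := by
      intro m h1 h2
      split_ifs with h
      · rcases h2 with h2 | h2
        · have hk0 : k = 0 := by omega
          have := hkpos ⟨m - 1, h.2⟩
          omega
        · omega
      · rfl
    rw [hAdef, Finset.mem_filter, Finset.mem_piAntidiag]
    beta_reduce
    refine ⟨⟨?_, ?_⟩, ?_⟩
    · rw [sum_icc_eq_sum_fin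
        (fun m => if h : 1 ≤ m ∧ m - 1 < n - k + 1 then i ⟨m - 1, h.2⟩ else 0)
        n (n - k + 1) hvanG]
      rw [Finset.sum_congr rfl fun j _ => hGeq j]
      exact hisum
    · intro m hm
      rw [Finset.mem_Icc]
      by_cases h : 1 ≤ m ∧ m - 1 < n - k + 1
      · refine ⟨h.1, ?_⟩
        by_contra hmn
        exact hm (hvanG m h.1 (Or.inl (by omega)))
      · rw [dif_neg h] at hm
        exact absurd rfl hm
    · rw [sum_icc_eq_sum_fin
        (fun m => m * if h : 1 ≤ m ∧ m - 1 < n - k + 1 then i ⟨m - 1, h.2⟩ else 0)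
        n (n - k + 1)
        (fun m h1 h2 => by
          show (m * if h : 1 ≤ m ∧ m - 1 < n - k + 1 then i ⟨m - 1, h.2⟩ else 0) = 0
          rw [hvanG m h1 h2, Nat.mul_zero])]
      rw [Finset.sum_congr rfl fun j _ => by rw [hGeq j]]
      exact hiw
  · -- left inverse
    intro g hg
    have hvan' := hvanA g hg
    rw [hAdef, Finset.mem_filter, Finset.mem_piAntidiag] at hg
    obtain ⟨⟨hgsum, hgsupp⟩, hgn⟩ := hg
    funext m
    beta_reduce
    by_cases h : 1 ≤ m ∧ m - 1 < n - k + 1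
    · rw [dif_pos h]
      exact congrArg g (show m - 1 + 1 = m by omega)
    · rw [dif_neg h]
      by_cases hm0 : m = 0
      · subst hm0
        by_contra hgm
        have := hgsupp 0 (Ne.symm hgm)
        rw [Finset.mem_Icc] at this
        omega
      · exact (hvan' m (by omega) (Or.inr (by omega))).symm
  · -- right inverse
    intro i hi
    funext j
    beta_reduce
    rw [dif_pos ⟨by omega, by simp only [Nat.add_sub_cancel]; exact j.2⟩]
    exact congrArg i (Fin.ext (by simp))
  · -- values agree
    intro g hg
    have hvan' := hvanA g hg
    rw [hAdef, Finset.mem_filter, Finset.mem_piAntidiag] at hg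
    obtain ⟨⟨hgsum, hgsupp⟩, hgn⟩ := hg
    beta_reduce
    have hspec := Nat.multinomial_spec (Finset.Icc 1 n) g
    rw [hgsum] at hspec
    have hspecR : (∏ m ∈ Finset.Icc 1 n, ((g m)! : ℝ)) *
        (Nat.multinomial (Finset.Icc 1 n) g : ℝ) = (k ! : ℝ) := by
      rw [← Nat.cast_prod, ← Nat.cast_mul, hspec]
    have hPne : (∏ m ∈ Finset.Icc 1 n, ((g m)! : ℝ)) ≠ 0 := by
      apply Finset.prod_ne_zero_iff.mpr
      intro m _
      exact_mod_cast (Nat.factorial_pos (g m)).ne'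
    have hkne : (k ! : ℝ) ≠ 0 := by exact_mod_cast (Nat.factorial_pos k).ne'
    have hfact : ∏ m ∈ Finset.Icc 1 n, ((g m)! : ℝ) =
        ∏ j : Fin (n - k + 1), ((g (j.1 + 1))! : ℝ) := by
      refine prod_icc_eq_prod_fin (fun m => ((g m)! : ℝ)) n (n - k + 1) ?_
      intro m h1 h2
      show ((g m)! : ℝ) = 1
      rw [hvan' m h1 h2]
      simp
    have hprod : ∏ m ∈ Finset.Icc 1 n, c m ^ g m =
        ∏ j : Fin (n - k + 1), c (j.1 + 1) ^ g (j.1 + 1) := by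
      refine prod_icc_eq_prod_fin (fun m => c m ^ g m) n (n - k + 1) ?_
      intro m h1 h2
      show c m ^ g m = 1
      rw [hvan' m h1 h2, pow_zero]
    have hMval : (Nat.multinomial (Finset.Icc 1 n) g : ℝ) =
        (k ! : ℝ) / ∏ m ∈ Finset.Icc 1 n, ((g m)! : ℝ) := by
      rw [eq_div_iff hPne, mul_comm]
      exact hspecR
    rw [hMval, hprod, hfact]
    field_simp
    try ring

end Aux

private lemma dFall_neg_half (l : ℝ) (m : ℕ) :
    dFall l (-(1 / 2)) m = (-1) ^ m * dRise l (1 / 2) m := by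
  unfold dFall dRise
  rw [show ((-1 : ℝ)) ^ m = ∏ _i ∈ Finset.range m, (-1 : ℝ) by
    rw [Finset.prod_const, Finset.card_range], ← Finset.prod_mul_distrib]
  exact Finset.prod_congr rfl fun i _ => by ring

private lemma centralSeq_one (l : ℝ) :
    centralSeq l (fun _ => 1) = degExp l (1 / 2) - degExp l (-(1 / 2)) := by
  ext m
  rw [centralSeq, map_sub, degExp, degExp, PowerSeries.coeff_mk, PowerSeries.coeff_mk,
    PowerSeries.coeff_mk]
  by_cases hm : m = 0
  · subst hm
    simp [dFall]
  · rw [if_neg hm, dFall_neg_half, one_mul, sub_div]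

/-- Corollary 2.3, second part: `T_{2,λ}(n,k) = T_{n,k}(1,…,1|λ)` together
with the explicit sum formula. -/
theorem degCentFact2_eq_degCentIncBell_one (l : ℝ) (n k : ℕ) (hkn : k ≤ n)
    (hpar : Even ((n : ℤ) - k)) :
    degCentFact2 l n k = degCentIncBell l (fun _ => 1) n k ∧
      degCentFact2 l n k =
        ∑ i ∈ partIdx n k,
          ((n ! : ℝ) / ∏ j, ((i j)! : ℝ)) *
            ∏ j, ((dFall l (1 / 2) (j.1 + 1) -
                (-1) ^ (j.1 + 1) * dRise l (1 / 2) (j.1 + 1)) / ((j.1 + 1)! : ℝ)) ^ i j := by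
  have h0 : PowerSeries.coeff 0 (degExp l (1 / 2) - degExp l (-(1 / 2))) = 0 := by
    rw [map_sub, degExp, degExp, PowerSeries.coeff_mk, PowerSeries.coeff_mk]
    simp [dFall]
  have hc : ∀ m, 1 ≤ m → m ≤ n →
      PowerSeries.coeff m (degExp l (1 / 2) - degExp l (-(1 / 2))) =
        (dFall l (1 / 2) m - (-1) ^ m * dRise l (1 / 2) m) / (m ! : ℝ) := by
    intro m _ _
    rw [map_sub, degExp, degExp, PowerSeries.coeff_mk, PowerSeries.coeff_mk,
      dFall_neg_half, sub_div]
  constructor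
  · rw [degCentFact2, degCentIncBell, centralSeq_one]
  · have hkey := key_expand (degExp l (1 / 2) - degExp l (-(1 / 2)))
      (fun m => (dFall l (1 / 2) m - (-1) ^ m * dRise l (1 / 2) m) / (m ! : ℝ)) n k hkn h0 hc
    rw [degCentFact2]
    exact hkey
end

section
/- For integers n ≥ k ≥ 0 with n - k ≡ 0 (mod 2), λ ∈ ℝ, and x ∈ ℝ, one has T_{n,k}(x, x, …, x|λ) = x^k · T_{n,k}(1, 1, …, 1|λ). -/
open PowerSeries Finset Nat

/-- `T_{n,k}(x,x,…,x|λ) = x^k T_{n,k}(1,1,…,1|λ)`. -/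
theorem degCentIncBell_const (l x : ℝ) (n k : ℕ) (hkn : k ≤ n) (hpar : Even ((n : ℤ) - k)) :
    degCentIncBell l (fun _ => x) n k = x ^ k * degCentIncBell l (fun _ => 1) n k := by
  have h : centralSeq l (fun _ => x) = x • centralSeq l (fun _ => 1) := by
    ext m
    simp only [centralSeq, PowerSeries.coeff_mk, map_smul, smul_eq_mul]
    split <;> ring
  simp only [degCentIncBell, h, smul_pow, smul_comm ((k ! : ℝ)⁻¹), map_smul, smul_eq_mul]
  ring
end

section
/- (Theorem 2.5) For every integer n ≥ 0, λ ∈ ℝ, and x ∈ ℝ, one has ∑_{k=0}^{n} x^k · T_{n,k}(1, 1, …, 1|λ) = B^{(c)}_{n,λ}(x), where B^{(c)}_{n,λ}(x) is the degenerate central Bell polynomial. -/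
open PowerSeries Finset Nat

/-- Theorem 2.5: `∑_{k=0}^{n} x^k T_{n,k}(1,…,1|λ) = B^{(c)}_{n,λ}(x)`. -/
theorem sum_degCentIncBell_one_eq (l x : ℝ) (n : ℕ) :
    ∑ k ∈ Finset.range (n + 1), x ^ k * degCentIncBell l (fun _ => 1) n k =
      degCentBellPoly l x n := by
  have hG : centralSeq l (fun _ => 1) = degExp l (1 / 2) - degExp l (-(1 / 2)) := by
    ext m
    simp only [centralSeq, degExp, PowerSeries.coeff_mk, map_sub]
    rcases Nat.eq_zero_or_pos m with h | h
    · simp [h, dFall]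
    · have hm : m ≠ 0 := h.ne'
      have : dFall l (-(1 / 2)) m = (-1) ^ m * dRise l (1 / 2) m := by
        simp only [dFall, dRise]
        calc ∏ i ∈ Finset.range m, (-(1 / 2) - (i : ℝ) * l)
            = ∏ i ∈ Finset.range m, (-1 : ℝ) * (1 / 2 + (i : ℝ) * l) :=
              Finset.prod_congr rfl fun i _ => by ring
          _ = (-1) ^ m * ∏ i ∈ Finset.range m, (1 / 2 + (i : ℝ) * l) := by
              rw [Finset.prod_mul_distrib, Finset.prod_const, Finset.card_range]
      rw [if_neg hm, this]
      ring
  simp only [degCentIncBell, degCentBellPoly, expComp, hG, PowerSeries.coeff_mk,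
    Finset.mul_sum]
  refine Finset.sum_congr rfl fun k _ => ?_
  have : (x • (degExp l (1 / 2) - degExp l (-(1 / 2)))) ^ k
      = x ^ k • (degExp l (1 / 2) - degExp l (-(1 / 2))) ^ k := by
    rw [smul_pow]
  rw [this, map_smul, map_smul]
  simp only [smul_eq_mul]
  ring
end

section
/- (Corollary 2.6) For every integer n ≥ 0, λ ∈ ℝ, and x ∈ ℝ, the degenerate central complete Bell polynomial with all arguments equal to x satisfies B_n^{(c)}(x, x, …, x|λ) = B^{(c)}_{n,λ}(x), where B^{(c)}_{n,λ}(x) is the degenerate central Bell polynomial. -/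
open PowerSeries Finset Nat

lemma centralSeq_const_eq (l x : ℝ) :
    centralSeq l (fun _ => x) = x • (degExp l (1 / 2) - degExp l (-(1 / 2))) := by
  ext m
  simp only [centralSeq, degExp, PowerSeries.coeff_mk, PowerSeries.coeff_smul,
    map_sub, smul_eq_mul]
  have key : dFall l (-(1 / 2)) m = (-1) ^ m * dRise l (1 / 2) m := by
    simp only [dFall, dRise]
    calc ∏ i ∈ Finset.range m, (-(1 / 2) - i * l)
        = ∏ i ∈ Finset.range m, (-1) * (1 / 2 + i * l) :=
          Finset.prod_congr rfl (by intros; ring)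
      _ = (-1) ^ m * ∏ i ∈ Finset.range m, (1 / 2 + i * l) := by
          rw [Finset.prod_mul_distrib, Finset.prod_const, Finset.card_range]
  rcases Nat.eq_zero_or_pos m with h | h
  · subst h; simp [dFall]
  · rw [if_neg h.ne', key]; ring

/-- Corollary 2.6: `B_n^{(c)}(x,…,x|λ) = B^{(c)}_{n,λ}(x)`. -/
theorem degCentCompBell_const (l x : ℝ) (n : ℕ) :
    degCentCompBell l (fun _ => x) n = degCentBellPoly l x n := by
  unfold degCentCompBell degCentBellPoly
  rw [centralSeq_const_eq]
end
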